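/- Let n, L ≥ 1 and z ≥ 1 be integers and let β¹, …, β^L ∈ ℝⁿ be pairwise distinct vectors. Let v be uniform on {−1,+1}ⁿ, let r have independent coordinates uniform on the integers {−2z, …, 2z}, and let q be uniform on {1, 2, …, 4z+1}, with v, r, q mutually independent. Call the triplet of vectors (v+r, (q−1)r, v+qr) good if for every triple of indices (i, j, k) ∈ {1,…,L}³ with i, j, k not all equal, ⟨v+r, β^i⟩ + ⟨(q−1)r, β^j⟩ ≠ ⟨v+qr, β^k⟩. Then P((v+r, (q−1)r, v+qr) is good) ≥ 1 − L³·(2/(4z+1) − 1/(4z+1)²). -/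

import Mathlib

open MeasureTheory
open Finset
open scoped ENNReal

/-- A triplet of query vectors `(v₁, v₂, v₃)` is *good* with respect to
`β¹, …, β^L` if, for every triple of indices `(i, j, k)` that are not all
equal, `⟨v₁, β^i⟩ + ⟨v₂, β^j⟩ ≠ ⟨v₃, β^k⟩`. -/
def IsGoodTriplet {L n : ℕ} (β : Fin L → Fin n → ℝ) (v₁ v₂ v₃ : Fin n → ℝ) :
    Prop :=
  ∀ i j k : Fin L, ¬(i = j ∧ j = k) →
    (∑ t, v₁ t * β i t) + (∑ t, v₂ t * β j t) ≠ ∑ t, v₃ t * β k t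


lemma GoodTripletAux.anti {n z : ℕ} (hn : 1 ≤ n) (hz : 1 ≤ z)
    (h2 : (Finset.Icc (-(2 * (z : ℤ))) (2 * (z : ℤ))).Nonempty)
    (w : Fin n → ℝ) (hw : w ≠ 0) (c : ℝ) :
    (Measure.pi fun _ : Fin n =>
        (PMF.uniformOfFinset (Finset.Icc (-(2 * (z : ℤ))) (2 * (z : ℤ))) h2).toMeasure)
      {r : Fin n → ℤ | ∑ t, (r t : ℝ) * w t = c} ≤ ((4 * z + 1 : ℕ) : ℝ≥0∞)⁻¹ := by
  classical
  have hmeas : ∀ (S : Set (Fin n → ℤ)), MeasurableSet S :=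
    fun S => (Set.to_countable S).measurableSet
  set s : Finset ℤ := Finset.Icc (-(2 * (z : ℤ))) (2 * (z : ℤ)) with hs_def
  have hs : s.Nonempty := h2
  have hcard : s.card = 4 * z + 1 := by
    rw [hs_def, Int.card_Icc]; omega
  set p : PMF ℤ := PMF.uniformOfFinset s hs with hp_def
  set μ : Measure (Fin n → ℤ) := Measure.pi fun _ : Fin n => p.toMeasure with hμ_def
  have hsing : ∀ r : Fin n → ℤ, μ {r} ≤ (((4 * z + 1 : ℕ) : ℝ≥0∞)⁻¹) ^ n := by
    intro r
    rw [hμ_def, ← Set.univ_pi_singleton, Measure.pi_pi]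
    calc ∏ t : Fin n, p.toMeasure {r t}
        ≤ ∏ _t : Fin n, ((4 * z + 1 : ℕ) : ℝ≥0∞)⁻¹ := by
          apply Finset.prod_le_prod'
          intro t _
          rw [PMF.toMeasure_apply_singleton _ _ (measurableSet_singleton _),
            hp_def, PMF.uniformOfFinset_apply, hcard]
          split <;> simp
      _ = (((4 * z + 1 : ℕ) : ℝ≥0∞)⁻¹) ^ n := by
          rw [Finset.prod_const, Finset.card_univ, Fintype.card_fin]
  -- the box
  set Box : Set (Fin n → ℤ) := Set.univ.pi fun _ : Fin n => (s : Set ℤ) with hBox_def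
  have hBox1 : μ Box = 1 := by
    rw [hBox_def, hμ_def, Measure.pi_pi]
    have h1 : p.toMeasure (s : Set ℤ) = 1 :=
      (PMF.toMeasure_apply_eq_one_iff (p := p) ((Set.to_countable _).measurableSet)).mpr
        (by rw [hp_def, PMF.support_uniformOfFinset])
    simp [h1]
  have hBoxc : μ Boxᶜ = 0 := by
    have : IsProbabilityMeasure μ := by rw [hμ_def]; infer_instance
    rw [prob_compl_eq_one_sub (hmeas _), hBox1, tsub_self]
  obtain ⟨t₀, ht₀⟩ : ∃ t, w t ≠ 0 := by
    by_contra h; push_neg at h; exact hw (funext h)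
  set T : Finset (Fin n → ℤ) :=
    (Fintype.piFinset fun _ : Fin n => s).filter (fun r => ∑ t, (r t : ℝ) * w t = c)
    with hT_def
  have hsub : {r : Fin n → ℤ | ∑ t, (r t : ℝ) * w t = c} ⊆ ↑T ∪ Boxᶜ := by
    intro r hr
    by_cases hb : r ∈ Box
    · left
      rw [hT_def]
      simp only [Finset.coe_filter, Set.mem_setOf_eq]
      refine ⟨Fintype.mem_piFinset.mpr fun t => ?_, hr⟩
      exact hb t (Set.mem_univ t)
    · right; exact hb
  -- card bound
  have hmaps : ∀ r ∈ T, Function.update r t₀ 0 ∈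
      Fintype.piFinset fun t : Fin n => if t = t₀ then ({0} : Finset ℤ) else s := by
    intro r hr
    rw [Fintype.mem_piFinset]
    intro t
    rcases eq_or_ne t t₀ with h | h
    · subst h; simp [Function.update_self]
    · simp only [Function.update_apply, if_neg h]
      have := (Finset.mem_filter.mp hr).1
      exact Fintype.mem_piFinset.mp this t
  have hinj : Set.InjOn (fun r => Function.update r t₀ 0) (↑T : Set (Fin n → ℤ)) := by
    intro r hr r' hr' h
    have hagree : ∀ t, t ≠ t₀ → r t = r' t := by
      intro t ht
      have := congrFun h t
      simpa [Function.update_apply, ht] using this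
    have hsum : ∑ t ∈ Finset.univ.erase t₀, (r t : ℝ) * w t
        = ∑ t ∈ Finset.univ.erase t₀, (r' t : ℝ) * w t := by
      apply Finset.sum_congr rfl
      intro t ht
      rw [hagree t (Finset.mem_erase.mp ht).1]
    have e1 : ∑ t, (r t : ℝ) * w t = c := (Finset.mem_filter.mp (Finset.mem_coe.mp hr)).2
    have e2 : ∑ t, (r' t : ℝ) * w t = c := (Finset.mem_filter.mp (Finset.mem_coe.mp hr')).2
    have s1 := Finset.add_sum_erase Finset.univ (fun t => ((r t : ℝ) * w t)) (Finset.mem_univ t₀)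
    have s2 := Finset.add_sum_erase Finset.univ (fun t => ((r' t : ℝ) * w t)) (Finset.mem_univ t₀)
    have : (r t₀ : ℝ) = (r' t₀ : ℝ) := by
      have h2 : (r t₀ : ℝ) * w t₀ = (r' t₀ : ℝ) * w t₀ := by
        rw [e1] at s1; rw [e2] at s2; linarith
      exact mul_right_cancel₀ ht₀ h2
    funext t
    rcases eq_or_ne t t₀ with h' | h'
    · subst h'; exact_mod_cast this
    · exact hagree t h'
  have hcardT : T.card ≤ (4 * z + 1) ^ (n - 1) := by
    have h1 := Finset.card_le_card_of_injOn _ hmaps hinj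
    rw [Fintype.card_piFinset] at h1
    refine h1.trans (le_of_eq ?_)
    rw [← Finset.mul_prod_erase Finset.univ _ (Finset.mem_univ t₀)]
    rw [if_pos rfl, Finset.card_singleton, one_mul]
    rw [Finset.prod_congr rfl (fun t ht => by
      rw [if_neg (Finset.mem_erase.mp ht).1, hcard])]
    rw [Finset.prod_const, Finset.card_erase_of_mem (Finset.mem_univ t₀),
      Finset.card_univ, Fintype.card_fin]
  -- put together
  have hμT : μ ↑T ≤ (T.card : ℝ≥0∞) * (((4 * z + 1 : ℕ) : ℝ≥0∞)⁻¹) ^ n := by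
    have hsub2 : (↑T : Set (Fin n → ℤ)) ⊆ ⋃ r ∈ T, ({r} : Set (Fin n → ℤ)) :=
      fun x hx => Set.mem_biUnion hx rfl
    refine le_trans (measure_mono hsub2)
      ((measure_biUnion_finset_le T (fun r => ({r} : Set (Fin n → ℤ)))).trans ?_)
    calc ∑ r ∈ T, μ {r} ≤ ∑ _r ∈ T, (((4 * z + 1 : ℕ) : ℝ≥0∞)⁻¹) ^ n :=
          Finset.sum_le_sum fun r _ => hsing r
      _ = (T.card : ℝ≥0∞) * (((4 * z + 1 : ℕ) : ℝ≥0∞)⁻¹) ^ n := by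
          rw [Finset.sum_const, nsmul_eq_mul]
  calc μ {r : Fin n → ℤ | ∑ t, (r t : ℝ) * w t = c}
      ≤ μ (↑T ∪ Boxᶜ) := measure_mono hsub
    _ ≤ μ ↑T + μ Boxᶜ := measure_union_le _ _
    _ = μ ↑T := by rw [hBoxc, add_zero]
    _ ≤ (T.card : ℝ≥0∞) * (((4 * z + 1 : ℕ) : ℝ≥0∞)⁻¹) ^ n := hμT
    _ ≤ ((4 * z + 1 : ℕ) ^ (n - 1) : ℝ≥0∞) * (((4 * z + 1 : ℕ) : ℝ≥0∞)⁻¹) ^ n := by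
        apply mul_le_mul_left
        exact_mod_cast Nat.cast_le.mpr hcardT
    _ = ((4 * z + 1 : ℕ) : ℝ≥0∞)⁻¹ := by
        have ha0 : ((4 * z + 1 : ℕ) : ℝ≥0∞) ≠ 0 := Nat.cast_ne_zero.mpr (by omega)
        have hat : ((4 * z + 1 : ℕ) : ℝ≥0∞) ≠ ⊤ := ENNReal.natCast_ne_top _
        obtain ⟨m, rfl⟩ : ∃ m, n = m + 1 := ⟨n - 1, by omega⟩
        simp only [Nat.add_sub_cancel]
        rw [pow_succ, ← mul_assoc, ← mul_pow, ENNReal.mul_inv_cancel ha0 hat,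
          one_pow, one_mul]


-- exceptional q₀
lemma GoodTripletAux.exists_q0 {n L : ℕ} (β : Fin L → Fin n → ℝ)
    (hβ : ∀ i j : Fin L, i ≠ j → β i ≠ β j) (i j k : Fin L)
    (hne : ¬(i = j ∧ j = k)) :
    ∃ q₀ : ℤ, ∀ q : ℤ, q ≠ q₀ →
      (fun t => β i t + ((q : ℝ) - 1) * β j t - (q : ℝ) * β k t) ≠ 0 := by
  by_cases hjk : j = k
  · subst hjk
    have hij : i ≠ j := fun h => hne ⟨h, rfl⟩
    refine ⟨0, fun q _ heq => hβ i j hij (funext fun t => ?_)⟩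
    have := congrFun heq t
    simp only [Pi.zero_apply] at this
    linarith
  · by_cases hex : ∃ q : ℤ,
        (fun t => β i t + ((q : ℝ) - 1) * β j t - (q : ℝ) * β k t) = 0
    · obtain ⟨q₀, hq₀⟩ := hex
      refine ⟨q₀, fun q hq heq => hβ j k hjk (funext fun t => ?_)⟩
      have h1 := congrFun hq₀ t
      have h2 := congrFun heq t
      simp only [Pi.zero_apply] at h1 h2
      have hqq : (q : ℝ) ≠ (q₀ : ℝ) := by exact_mod_cast hq
      have : ((q : ℝ) - q₀) * (β j t - β k t) = 0 := by ring_nf; nlinarith [h1, h2]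
      rcases mul_eq_zero.mp this with h | h
      · exact absurd (by linarith : (q : ℝ) = q₀) hqq
      · linarith
    · push_neg at hex
      exact ⟨0, fun q _ => hex q⟩

lemma GoodTripletAux.badBound (n L z : ℕ) (hn : 1 ≤ n) (hz : 1 ≤ z)
    (β : Fin L → Fin n → ℝ) (hβ : ∀ i j : Fin L, i ≠ j → β i ≠ β j)
    (h1 : ({-1, 1} : Finset ℤ).Nonempty)
    (h2 : (Finset.Icc (-(2 * (z : ℤ))) (2 * (z : ℤ))).Nonempty)
    (h3 : (Finset.Icc (1 : ℤ) (4 * (z : ℤ) + 1)).Nonempty)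
    (i j k : Fin L) (hne : ¬(i = j ∧ j = k))
    (anti : ∀ (w : Fin n → ℝ), w ≠ 0 → ∀ c : ℝ,
      (Measure.pi fun _ : Fin n =>
          (PMF.uniformOfFinset (Finset.Icc (-(2 * (z : ℤ))) (2 * (z : ℤ))) h2).toMeasure)
        {r : Fin n → ℤ | ∑ t, (r t : ℝ) * w t = c} ≤ ((4 * z + 1 : ℕ) : ℝ≥0∞)⁻¹) :
    ((Measure.pi fun _ : Fin n =>
        (PMF.uniformOfFinset ({-1, 1} : Finset ℤ) h1).toMeasure).prod
      ((Measure.pi fun _ : Fin n =>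
          (PMF.uniformOfFinset (Finset.Icc (-(2 * (z : ℤ))) (2 * (z : ℤ))) h2).toMeasure).prod
        (PMF.uniformOfFinset (Finset.Icc (1 : ℤ) (4 * (z : ℤ) + 1)) h3).toMeasure))
      {ω : (Fin n → ℤ) × (Fin n → ℤ) × ℤ |
        (∑ t, ((ω.1 t : ℝ) + (ω.2.1 t : ℝ)) * β i t)
          + (∑ t, ((ω.2.2 : ℝ) - 1) * (ω.2.1 t : ℝ) * β j t)
          = ∑ t, ((ω.1 t : ℝ) + (ω.2.2 : ℝ) * (ω.2.1 t : ℝ)) * β k t}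
      ≤ (1 - ((4 * z + 1 : ℕ) : ℝ≥0∞)⁻¹) * ((4 * z + 1 : ℕ) : ℝ≥0∞)⁻¹
          + ((4 * z + 1 : ℕ) : ℝ≥0∞)⁻¹ := by
  classical
  set a : ℝ≥0∞ := ((4 * z + 1 : ℕ) : ℝ≥0∞)⁻¹ with ha
  set μv := Measure.pi fun _ : Fin n =>
    (PMF.uniformOfFinset ({-1, 1} : Finset ℤ) h1).toMeasure with hμv
  set μr := Measure.pi fun _ : Fin n =>
    (PMF.uniformOfFinset (Finset.Icc (-(2 * (z : ℤ))) (2 * (z : ℤ))) h2).toMeasure with hμr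
  set pq := PMF.uniformOfFinset (Finset.Icc (1 : ℤ) (4 * (z : ℤ) + 1)) h3 with hpq
  set μq := pq.toMeasure with hμq
  obtain ⟨q₀, hq₀⟩ := GoodTripletAux.exists_q0 β hβ i j k hne
  have hmeasV : ∀ (S : Set (Fin n → ℤ)), MeasurableSet S :=
    fun S => (Set.to_countable S).measurableSet
  have hmeasQ : ∀ (S : Set ℤ), MeasurableSet S :=
    fun S => (Set.to_countable S).measurableSet
  have hmeasRQ : ∀ (S : Set ((Fin n → ℤ) × ℤ)), MeasurableSet S :=
    fun S => (Set.to_countable S).measurableSet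
  have hmeasP : ∀ (S : Set ((Fin n → ℤ) × (Fin n → ℤ) × ℤ)), MeasurableSet S :=
    fun S => (Set.to_countable S).measurableSet
  rw [Measure.prod_apply (hmeasP _)]
  have hinner : ∀ v : Fin n → ℤ,
      (μr.prod μq) (Prod.mk v ⁻¹'
        {ω : (Fin n → ℤ) × (Fin n → ℤ) × ℤ |
          (∑ t, ((ω.1 t : ℝ) + (ω.2.1 t : ℝ)) * β i t)
            + (∑ t, ((ω.2.2 : ℝ) - 1) * (ω.2.1 t : ℝ) * β j t)
            = ∑ t, ((ω.1 t : ℝ) + (ω.2.2 : ℝ) * (ω.2.1 t : ℝ)) * β k t})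
      ≤ (1 - a) * a + a := by
    intro v
    rw [Measure.prod_apply_symm (hmeasRQ _)]
    have hpt : ∀ q : ℤ,
        μr ((fun r => (r, q)) ⁻¹' (Prod.mk v ⁻¹'
          {ω : (Fin n → ℤ) × (Fin n → ℤ) × ℤ |
            (∑ t, ((ω.1 t : ℝ) + (ω.2.1 t : ℝ)) * β i t)
              + (∑ t, ((ω.2.2 : ℝ) - 1) * (ω.2.1 t : ℝ) * β j t)
              = ∑ t, ((ω.1 t : ℝ) + (ω.2.2 : ℝ) * (ω.2.1 t : ℝ)) * β k t}))
        ≤ Set.indicator {q₀} (fun _ => 1 - a) q + a := by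
      intro q
      by_cases hq : q = q₀
      · subst hq
        rw [Set.indicator_of_mem (Set.mem_singleton q) (fun _ => 1 - a)]
        have : IsProbabilityMeasure μr := by rw [hμr]; infer_instance
        refine le_trans prob_le_one (le_of_eq ?_)
        rw [tsub_add_cancel_of_le]
        rw [ha]
        simp [ENNReal.inv_le_one]
      · rw [Set.indicator_of_notMem (by simpa using hq) (fun _ => 1 - a), zero_add]
        have hw := hq₀ q hq
        have hset : ((fun r => (r, q)) ⁻¹' (Prod.mk v ⁻¹'
            {ω : (Fin n → ℤ) × (Fin n → ℤ) × ℤ |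
              (∑ t, ((ω.1 t : ℝ) + (ω.2.1 t : ℝ)) * β i t)
                + (∑ t, ((ω.2.2 : ℝ) - 1) * (ω.2.1 t : ℝ) * β j t)
                = ∑ t, ((ω.1 t : ℝ) + (ω.2.2 : ℝ) * (ω.2.1 t : ℝ)) * β k t}))
            = {r : Fin n → ℤ |
                ∑ t, (r t : ℝ) * (β i t + ((q : ℝ) - 1) * β j t - (q : ℝ) * β k t)
                  = ∑ t, (v t : ℝ) * (β k t - β i t)} := by
          ext r
          simp only [Set.mem_preimage, Set.mem_setOf_eq]
          have key : ((∑ t, ((v t : ℝ) + (r t : ℝ)) * β i t)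
              + (∑ t, ((q : ℝ) - 1) * (r t : ℝ) * β j t))
              - (∑ t, ((v t : ℝ) + (q : ℝ) * (r t : ℝ)) * β k t)
              = (∑ t, (r t : ℝ) * (β i t + ((q : ℝ) - 1) * β j t - (q : ℝ) * β k t))
                - ∑ t, (v t : ℝ) * (β k t - β i t) := by
            rw [← Finset.sum_add_distrib, ← Finset.sum_sub_distrib, ← Finset.sum_sub_distrib]
            exact Finset.sum_congr rfl fun t _ => by ring
          constructor
          · intro h; have := sub_eq_zero.mpr h; rw [key] at this; exact sub_eq_zero.mp this
          · intro h; have := sub_eq_zero.mpr h; rw [← key] at this; exact sub_eq_zero.mp this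
        rw [hset]
        exact anti _ hw _
    calc ∫⁻ q, μr ((fun r => (r, q)) ⁻¹' (Prod.mk v ⁻¹' _)) ∂μq
        ≤ ∫⁻ q, (Set.indicator {q₀} (fun _ => 1 - a) q + a) ∂μq := lintegral_mono hpt
      _ = (1 - a) * μq {q₀} + a * μq Set.univ := by
          rw [lintegral_add_right _ measurable_const,
            lintegral_indicator_const (hmeasQ _), lintegral_const]
      _ ≤ (1 - a) * a + a := by
          have h1' : μq {q₀} ≤ a := by
            rw [hμq, PMF.toMeasure_apply_singleton _ _ (measurableSet_singleton _),
              hpq, PMF.uniformOfFinset_apply]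
            have : (Finset.Icc (1 : ℤ) (4 * (z : ℤ) + 1)).card = 4 * z + 1 := by
              rw [Int.card_Icc]; omega
            rw [this, ha]
            split <;> simp
          have : IsProbabilityMeasure μq := by rw [hμq]; infer_instance
          rw [measure_univ, mul_one]
          exact add_le_add_left (mul_le_mul_right h1' _) a
  calc ∫⁻ v, (μr.prod μq) (Prod.mk v ⁻¹' _) ∂μv
      ≤ ∫⁻ _v, ((1 - a) * a + a) ∂μv := lintegral_mono hinner
    _ = (1 - a) * a + a := by
        have : IsProbabilityMeasure μv := by rw [hμv]; infer_instance
        rw [lintegral_const, measure_univ, mul_one]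


theorem GoodTripletAux.main' (n L z : ℕ) (hn : 1 ≤ n) (hL : 1 ≤ L) (hz : 1 ≤ z)
    (β : Fin L → Fin n → ℝ) (hβ : ∀ i j : Fin L, i ≠ j → β i ≠ β j)
    (h1 : ({-1, 1} : Finset ℤ).Nonempty)
    (h2 : (Finset.Icc (-(2 * (z : ℤ))) (2 * (z : ℤ))).Nonempty)
    (h3 : (Finset.Icc (1 : ℤ) (4 * (z : ℤ) + 1)).Nonempty)
    (badBound' : ∀ i j k : Fin L, ¬(i = j ∧ j = k) →
      ((Measure.pi fun _ : Fin n =>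
          (PMF.uniformOfFinset ({-1, 1} : Finset ℤ) h1).toMeasure).prod
        ((Measure.pi fun _ : Fin n =>
            (PMF.uniformOfFinset (Finset.Icc (-(2 * (z : ℤ))) (2 * (z : ℤ))) h2).toMeasure).prod
          (PMF.uniformOfFinset (Finset.Icc (1 : ℤ) (4 * (z : ℤ) + 1)) h3).toMeasure))
        {ω : (Fin n → ℤ) × (Fin n → ℤ) × ℤ |
          (∑ t, ((ω.1 t : ℝ) + (ω.2.1 t : ℝ)) * β i t)
            + (∑ t, ((ω.2.2 : ℝ) - 1) * (ω.2.1 t : ℝ) * β j t)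
            = ∑ t, ((ω.1 t : ℝ) + (ω.2.2 : ℝ) * (ω.2.1 t : ℝ)) * β k t}
        ≤ (1 - ((4 * z + 1 : ℕ) : ℝ≥0∞)⁻¹) * ((4 * z + 1 : ℕ) : ℝ≥0∞)⁻¹
            + ((4 * z + 1 : ℕ) : ℝ≥0∞)⁻¹) :
    ENNReal.ofReal
        (1 - (L : ℝ) ^ 3 *
          (2 / (4 * (z : ℝ) + 1) - 1 / (4 * (z : ℝ) + 1) ^ 2))
      ≤ ((Measure.pi fun _ : Fin n =>
            (PMF.uniformOfFinset ({-1, 1} : Finset ℤ) h1).toMeasure).prod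
          ((Measure.pi fun _ : Fin n =>
              (PMF.uniformOfFinset (Finset.Icc (-(2 * (z : ℤ))) (2 * (z : ℤ))) h2).toMeasure).prod
            (PMF.uniformOfFinset (Finset.Icc (1 : ℤ) (4 * (z : ℤ) + 1)) h3).toMeasure))
          {ω : (Fin n → ℤ) × (Fin n → ℤ) × ℤ |
            IsGoodTriplet β
              (fun t => (ω.1 t : ℝ) + (ω.2.1 t : ℝ))
              (fun t => ((ω.2.2 : ℝ) - 1) * (ω.2.1 t : ℝ))
              (fun t => (ω.1 t : ℝ) + (ω.2.2 : ℝ) * (ω.2.1 t : ℝ))} := by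
  classical
  have hmeasP : ∀ (S : Set ((Fin n → ℤ) × (Fin n → ℤ) × ℤ)), MeasurableSet S :=
    fun S => (Set.to_countable S).measurableSet
  set a : ℝ≥0∞ := ((4 * z + 1 : ℕ) : ℝ≥0∞)⁻¹ with ha
  set E : ℝ≥0∞ := (1 - a) * a + a with hE
  set μ := ((Measure.pi fun _ : Fin n =>
            (PMF.uniformOfFinset ({-1, 1} : Finset ℤ) h1).toMeasure).prod
          ((Measure.pi fun _ : Fin n =>
              (PMF.uniformOfFinset (Finset.Icc (-(2 * (z : ℤ))) (2 * (z : ℤ))) h2).toMeasure).prod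
            (PMF.uniformOfFinset (Finset.Icc (1 : ℤ) (4 * (z : ℤ) + 1)) h3).toMeasure)) with hμ
  haveI : IsProbabilityMeasure μ := by rw [hμ]; infer_instance
  set Bad : Fin L × Fin L × Fin L → Set ((Fin n → ℤ) × (Fin n → ℤ) × ℤ) :=
    fun p => {ω | ¬(p.1 = p.2.1 ∧ p.2.1 = p.2.2) ∧
      ((∑ t, ((ω.1 t : ℝ) + (ω.2.1 t : ℝ)) * β p.1 t)
        + (∑ t, ((ω.2.2 : ℝ) - 1) * (ω.2.1 t : ℝ) * β p.2.1 t)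
        = ∑ t, ((ω.1 t : ℝ) + (ω.2.2 : ℝ) * (ω.2.1 t : ℝ)) * β p.2.2 t)} with hBad
  set G : Set ((Fin n → ℤ) × (Fin n → ℤ) × ℤ) :=
    {ω : (Fin n → ℤ) × (Fin n → ℤ) × ℤ |
      IsGoodTriplet β
        (fun t => (ω.1 t : ℝ) + (ω.2.1 t : ℝ))
        (fun t => ((ω.2.2 : ℝ) - 1) * (ω.2.1 t : ℝ))
        (fun t => (ω.1 t : ℝ) + (ω.2.2 : ℝ) * (ω.2.1 t : ℝ))} with hG
  have hGc : Gᶜ ⊆ ⋃ p : Fin L × Fin L × Fin L, Bad p := by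
    intro ω hω
    simp only [hG, Set.mem_compl_iff, Set.mem_setOf_eq, IsGoodTriplet] at hω
    push_neg at hω
    obtain ⟨i, j, k, hne, heq⟩ := hω
    exact Set.mem_iUnion.mpr ⟨(i, j, k), fun h => hne h.1 h.2, heq⟩
  have hBadLe : ∀ p : Fin L × Fin L × Fin L, μ (Bad p) ≤ E := by
    intro p
    by_cases hne : p.1 = p.2.1 ∧ p.2.1 = p.2.2
    · have : Bad p = ∅ := by
        rw [hBad]
        ext ω
        simp only [Set.mem_setOf_eq, Set.mem_empty_iff_false, iff_false]
        intro h
        exact h.1 hne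
      rw [this, measure_empty]
      exact zero_le
    · refine le_trans (measure_mono ?_) (badBound' p.1 p.2.1 p.2.2 hne)
      intro ω hω
      exact hω.2
  have hGcle : μ Gᶜ ≤ (L : ℝ≥0∞) ^ 3 * E := by
    calc μ Gᶜ ≤ μ (⋃ p : Fin L × Fin L × Fin L, Bad p) := measure_mono hGc
      _ ≤ ∑' p : Fin L × Fin L × Fin L, μ (Bad p) := measure_iUnion_le _
      _ = ∑ p : Fin L × Fin L × Fin L, μ (Bad p) := tsum_fintype _
      _ ≤ (Finset.univ : Finset (Fin L × Fin L × Fin L)).card • E :=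
          Finset.sum_le_card_nsmul _ _ _ (fun p _ => hBadLe p)
      _ = (L : ℝ≥0∞) ^ 3 * E := by
          rw [nsmul_eq_mul, Finset.card_univ]
          congr 1
          rw [Fintype.card_prod, Fintype.card_prod, Fintype.card_fin]
          push_cast
          ring
  -- numeric facts
  have hNposℝ : (0 : ℝ) < 4 * (z : ℝ) + 1 := by positivity
  have hcast : ((4 * z + 1 : ℕ) : ℝ) = 4 * (z : ℝ) + 1 := by push_cast; ring
  have haN0 : ((4 * z + 1 : ℕ) : ℝ≥0∞) ≠ 0 := Nat.cast_ne_zero.mpr (by omega)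
  have ha1 : a ≤ 1 := by
    rw [ha]
    simp only [ENNReal.inv_le_one]
    have : (1 : ℕ) ≤ 4 * z + 1 := by omega
    exact_mod_cast this
  have haT : a ≠ ⊤ := by
    rw [ha]
    exact ENNReal.inv_ne_top.mpr haN0
  have haa : a * a ≤ a := by
    calc a * a ≤ 1 * a := mul_le_mul_left ha1 a
      _ = a := one_mul a
  have hEeq : E = ENNReal.ofReal
      (2 / (4 * (z : ℝ) + 1) - 1 / (4 * (z : ℝ) + 1) ^ 2) := by
    have e1 : E = 2 * a - a * a := by
      have haaT : a * a ≠ ⊤ := ENNReal.mul_ne_top haT haT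
      rw [hE, ENNReal.sub_mul (fun _ _ => haT), one_mul,
        ENNReal.sub_add_eq_add_sub haa haaT, two_mul]
    have e2 : ENNReal.ofReal (2 / (4 * (z : ℝ) + 1)) = 2 * a := by
      rw [ENNReal.ofReal_div_of_pos hNposℝ, ← hcast, ENNReal.ofReal_natCast,
        ENNReal.ofReal_ofNat, div_eq_mul_inv, ha]
    have e3 : ENNReal.ofReal (1 / (4 * (z : ℝ) + 1) ^ 2) = a * a := by
      rw [ENNReal.ofReal_div_of_pos (by positivity), ENNReal.ofReal_one,
        ENNReal.ofReal_pow (le_of_lt hNposℝ), ← hcast, ENNReal.ofReal_natCast,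
        ha, one_div, sq, ENNReal.mul_inv (Or.inl haN0) (Or.inl (ENNReal.natCast_ne_top _))]
    rw [ENNReal.ofReal_sub _ (by positivity), e2, e3, e1]
  have hxr0 : (0 : ℝ) ≤ 2 / (4 * (z : ℝ) + 1) - 1 / (4 * (z : ℝ) + 1) ^ 2 := by
    rw [sub_nonneg, div_le_div_iff₀ (by positivity) hNposℝ]
    nlinarith
  have hkey : (L : ℝ≥0∞) ^ 3 * E ≤ ENNReal.ofReal
      ((L : ℝ) ^ 3 * (2 / (4 * (z : ℝ) + 1) - 1 / (4 * (z : ℝ) + 1) ^ 2)) := by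
    rw [ENNReal.ofReal_mul (by positivity), hEeq]
    apply mul_le_mul_left
    rw [ENNReal.ofReal_pow (by positivity), ENNReal.ofReal_natCast]
  have hGeq : μ G = 1 - μ Gᶜ := by
    have := prob_compl_eq_one_sub (μ := μ) (hmeasP Gᶜ)
    rw [compl_compl] at this
    exact this
  calc ENNReal.ofReal
        (1 - (L : ℝ) ^ 3 *
          (2 / (4 * (z : ℝ) + 1) - 1 / (4 * (z : ℝ) + 1) ^ 2))
      = 1 - ENNReal.ofReal
          ((L : ℝ) ^ 3 *
            (2 / (4 * (z : ℝ) + 1) - 1 / (4 * (z : ℝ) + 1) ^ 2)) := by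
        rw [ENNReal.ofReal_sub _ (by positivity), ENNReal.ofReal_one]
    _ ≤ 1 - (L : ℝ≥0∞) ^ 3 * E := tsub_le_tsub_left hkey 1
    _ ≤ 1 - μ Gᶜ := tsub_le_tsub_left hGcle 1
    _ = μ G := hGeq.symm

/-- **A random triplet `(v+r, (q−1)r, v+qr)` is good with high probability.**
With `v` uniform on `{−1,+1}ⁿ`, `r` with independent coordinates uniform on
the integers `{−2z, …, 2z}`, and `q` uniform on `{1, …, 4z+1}`, all mutually
independent, the triplet `(v+r, (q−1)r, v+qr)` is good with respect to
pairwise distinct `β¹, …, β^L` with probability at least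
`1 − L³(2/(4z+1) − 1/(4z+1)²)`. -/
theorem good_triplet_probability
    (n L z : ℕ) (hn : 1 ≤ n) (hL : 1 ≤ L) (hz : 1 ≤ z)
    (β : Fin L → Fin n → ℝ) (hβ : ∀ i j : Fin L, i ≠ j → β i ≠ β j) :
    ENNReal.ofReal
        (1 - (L : ℝ) ^ 3 *
          (2 / (4 * (z : ℝ) + 1) - 1 / (4 * (z : ℝ) + 1) ^ 2))
      ≤ ((Measure.pi fun _ : Fin n =>
            (PMF.uniformOfFinset ({-1, 1} : Finset ℤ) (by simp)).toMeasure).prod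
          ((Measure.pi fun _ : Fin n =>
              (PMF.uniformOfFinset (Finset.Icc (-(2 * (z : ℤ))) (2 * (z : ℤ)))
                (Finset.nonempty_Icc.mpr (by omega))).toMeasure).prod
            (PMF.uniformOfFinset (Finset.Icc (1 : ℤ) (4 * (z : ℤ) + 1))
              (Finset.nonempty_Icc.mpr (by omega))).toMeasure))
          {ω : (Fin n → ℤ) × (Fin n → ℤ) × ℤ |
            IsGoodTriplet β
              (fun t => (ω.1 t : ℝ) + (ω.2.1 t : ℝ))
              (fun t => ((ω.2.2 : ℝ) - 1) * (ω.2.1 t : ℝ))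
              (fun t => (ω.1 t : ℝ) + (ω.2.2 : ℝ) * (ω.2.1 t : ℝ))} :=
  GoodTripletAux.main' n L z hn hL hz β hβ _ _ _
    (fun i j k hne =>
      GoodTripletAux.badBound n L z hn hz β hβ _ _ _ i j k hne
        (fun w hw c => GoodTripletAux.anti hn hz _ w hw c))
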